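/- Let c = (c_1 ≥ … ≥ c_{n−r}) be a non-increasing sequence of non-negative integers, let 0 ≤ x ≤ n − r, and define d = (c_{x+1}, …, c_{n−r}) (the truncation). Suppose (g_j) is any sequence with Σ_{i=1}^{j} c_i ≤ Σ_{i=1}^{j} g_i for 1 ≤ j ≤ x and Σ_{i=1}^{x} c_i = Σ_{i=1}^{x} g_i. Then c ≺' (d, g') for g' the non-increasing rearrangement of (g_1, …, g_x); in particular, taking g = (c_1, …, c_x), c ≺' (d, (c_1, …, c_x)). -/
import Mathlib


/-- Generalized majorization `g ≺' (d, a)` for 1-indexed integer sequences: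
`d` of length `m`, `a` of length `s`, `g` of length `m + s`.
Conventions `d i = +∞` for `i < 1` and `d (m+1) = -∞` are encoded in the
definition of the set whose infimum is `h j`. -/
def GenMaj (m s : ℕ) (d a g : ℕ → ℤ) : Prop :=
  (∀ i, 1 ≤ i → i ≤ m → g (i + s) ≤ d i) ∧
  (∀ j, 1 ≤ j → j ≤ s →
    ∑ i ∈ Finset.Icc 1 (sInf {i : ℕ | j ≤ i ∧ (m < i - j + 1 ∨ d (i - j + 1) < g i)}), g i
      - ∑ i ∈ Finset.Icc 1
          (sInf {i : ℕ | j ≤ i ∧ (m < i - j + 1 ∨ d (i - j + 1) < g i)} - j), d i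
      ≤ ∑ i ∈ Finset.Icc 1 j, a i) ∧
  (∑ i ∈ Finset.Icc 1 (m + s), g i
    = ∑ i ∈ Finset.Icc 1 m, d i + ∑ i ∈ Finset.Icc 1 s, a i)

/-- antitone from the step condition -/
lemma anti_step {f : ℕ → ℤ} {M : ℕ} (h : ∀ i, 1 ≤ i → i < M → f (i + 1) ≤ f i) :
    ∀ a b, 1 ≤ a → a ≤ b → b ≤ M → f b ≤ f a := by
  intro a b ha hab hbM
  induction b with
  | zero => omega
  | succ n ih =>
    rcases Nat.lt_or_ge a (n + 1) with hlt | hge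
    · have h1 : f (n + 1) ≤ f n := h n (by omega) (by omega)
      exact h1.trans (ih (by omega) (by omega))
    · have : a = n + 1 := by omega
      simp [this]

/-- shift of a sum -/
lemma shift_sum (c : ℕ → ℤ) (t x : ℕ) :
    ∑ i ∈ Finset.Icc 1 t, c (i + x) = ∑ i ∈ Finset.Icc (1 + x) (t + x), c i := by
  rw [← Finset.map_add_right_Icc, Finset.sum_map]
  rfl

/-- splitting an `Icc 1 x` sum at `j` -/
lemma icc_split (f : ℕ → ℤ) (j x : ℕ) (hjx : j ≤ x) :
    ∑ i ∈ Finset.Icc 1 x, f i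
      = ∑ i ∈ Finset.Icc 1 j, f i + ∑ i ∈ Finset.Icc (j + 1) x, f i := by
  have h := Finset.sum_Ioc_consecutive f (Nat.zero_le j) hjx
  rw [← Finset.Icc_add_one_left_eq_Ioc, ← Finset.Icc_add_one_left_eq_Ioc, ← Finset.Icc_add_one_left_eq_Ioc] at h
  exact h.symm

/-- prefix sums of a non-increasing rearrangement dominate the original prefix sums -/
lemma prefix_le (x : ℕ) (g g' : ℕ → ℤ)
    (hg'mono : ∀ i, 1 ≤ i → i < x → g' (i + 1) ≤ g' i)
    (hg'perm : (Finset.Icc 1 x).val.map g' = (Finset.Icc 1 x).val.map g) :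
    ∀ j, 1 ≤ j → j ≤ x →
      ∑ i ∈ Finset.Icc 1 j, g i ≤ ∑ i ∈ Finset.Icc 1 j, g' i := by
  have hphi : ∀ φ : ℤ → ℤ,
      ∑ i ∈ Finset.Icc 1 x, φ (g i) = ∑ i ∈ Finset.Icc 1 x, φ (g' i) := by
    intro φ
    rw [Finset.sum, Finset.sum, show (fun i => φ (g i)) = φ ∘ g from rfl,
      show (fun i => φ (g' i)) = φ ∘ g' from rfl,
      ← Multiset.map_map, ← Multiset.map_map, hg'perm]
  intro j hj hjx
  set t : ℤ := g' j with ht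
  have step1 : ∑ i ∈ Finset.Icc 1 j, g i
      ≤ ∑ i ∈ Finset.Icc 1 j, (max (g i - t) 0 + t) := by
    apply Finset.sum_le_sum
    intro i _
    have := le_max_left (g i - t) 0
    omega
  have step2 : ∑ i ∈ Finset.Icc 1 j, (max (g i - t) 0 + t)
      = (∑ i ∈ Finset.Icc 1 j, max (g i - t) 0) + j * t := by
    rw [Finset.sum_add_distrib, Finset.sum_const, Nat.card_Icc]
    simp [nsmul_eq_mul]
  have step3 : ∑ i ∈ Finset.Icc 1 j, max (g i - t) 0
      ≤ ∑ i ∈ Finset.Icc 1 x, max (g i - t) 0 := by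
    apply Finset.sum_le_sum_of_subset_of_nonneg
    · exact Finset.Icc_subset_Icc_right hjx
    · intro i _ _; exact le_max_right _ _
  have step4 : ∑ i ∈ Finset.Icc 1 x, max (g i - t) 0
      = ∑ i ∈ Finset.Icc 1 x, max (g' i - t) 0 := hphi (fun v => max (v - t) 0)
  have split : ∑ i ∈ Finset.Icc 1 x, max (g' i - t) 0
      = (∑ i ∈ Finset.Icc 1 j, max (g' i - t) 0)
        + ∑ i ∈ Finset.Icc (j + 1) x, max (g' i - t) 0 :=
    icc_split _ j x hjx
  have tail0 : ∑ i ∈ Finset.Icc (j + 1) x, max (g' i - t) 0 = 0 := by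
    apply Finset.sum_eq_zero
    intro i hi
    rw [Finset.mem_Icc] at hi
    have : g' i ≤ t := anti_step hg'mono j i hj (by omega) hi.2
    omega
  have head : ∑ i ∈ Finset.Icc 1 j, max (g' i - t) 0
      = ∑ i ∈ Finset.Icc 1 j, (g' i - t) := by
    apply Finset.sum_congr rfl
    intro i hi
    rw [Finset.mem_Icc] at hi
    have : t ≤ g' i := anti_step hg'mono i j hi.1 hi.2 hjx
    omega
  have final : (∑ i ∈ Finset.Icc 1 j, (g' i - t)) + j * t
      = ∑ i ∈ Finset.Icc 1 j, g' i := by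
    rw [Finset.sum_sub_distrib, Finset.sum_const, Nat.card_Icc]
    simp [nsmul_eq_mul]
  calc ∑ i ∈ Finset.Icc 1 j, g i
      ≤ ∑ i ∈ Finset.Icc 1 j, (max (g i - t) 0 + t) := step1
    _ = (∑ i ∈ Finset.Icc 1 j, max (g i - t) 0) + j * t := step2
    _ ≤ (∑ i ∈ Finset.Icc 1 x, max (g i - t) 0) + j * t := by linarith
    _ = (∑ i ∈ Finset.Icc 1 x, max (g' i - t) 0) + j * t := by rw [step4]
    _ = (∑ i ∈ Finset.Icc 1 j, max (g' i - t) 0) + j * t := by rw [split, tail0]; ring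
    _ = (∑ i ∈ Finset.Icc 1 j, (g' i - t)) + j * t := by rw [head]
    _ = ∑ i ∈ Finset.Icc 1 j, g' i := final

/-- main lemma: truncation majorization for any `a` dominating `c` on prefixes
with equal totals -/
lemma genmaj_of (N x : ℕ) (hx : x ≤ N) (c : ℕ → ℤ)
    (hcmono : ∀ i, 1 ≤ i → i < N → c (i + 1) ≤ c i)
    (a : ℕ → ℤ)
    (ha : ∀ j, 1 ≤ j → j ≤ x →
      ∑ i ∈ Finset.Icc 1 j, c i ≤ ∑ i ∈ Finset.Icc 1 j, a i)
    (haeq : ∑ i ∈ Finset.Icc 1 x, c i = ∑ i ∈ Finset.Icc 1 x, a i) :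
    GenMaj (N - x) x (fun i => c (i + x)) a c := by
  set m := N - x with hm
  have hmx : m + x = N := by omega
  refine ⟨fun i _ _ => le_refl _, ?_, ?_⟩
  · -- the h_j conditions
    intro j hj hjx
    set S : Set ℕ :=
      {i : ℕ | j ≤ i ∧ (m < i - j + 1 ∨ (fun i => c (i + x)) (i - j + 1) < c i)} with hS
    have hmemS : m + j ∈ S := by
      constructor
      · omega
      · left; omega
    have hne : S.Nonempty := ⟨m + j, hmemS⟩
    set h := sInf S with hh
    have hhS : h ∈ S := Nat.sInf_mem hne
    have hjh : j ≤ h := hhS.1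
    have hhm : h ≤ m + j := Nat.sInf_le hmemS
    have hnotS : ∀ i, j ≤ i → i < h → i - j + 1 ≤ m ∧ c i ≤ c (i - j + 1 + x) := by
      intro i hji hih
      have : i ∉ S := Nat.notMem_of_lt_sInf hih
      rw [hS] at this
      simp only [Set.mem_setOf_eq, not_and, not_or, not_lt] at this
      exact this hji
    have heq : ∀ i, j ≤ i → i < h → c i = c (i - j + 1 + x) := by
      intro i hji hih
      obtain ⟨h1, h2⟩ := hnotS i hji hih
      have hle : c (i - j + 1 + x) ≤ c i :=
        anti_step hcmono i (i - j + 1 + x) (by omega) (by omega) (by omega)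
      omega
    -- reduce to comparison with prefix sums of c
    have key : ∑ i ∈ Finset.Icc 1 h, c i
        - ∑ i ∈ Finset.Icc 1 (h - j), c (i + x) ≤ ∑ i ∈ Finset.Icc 1 j, c i := by
      set u := h - j with hu
      have hhu : h = j + u := by omega
      have splitc : ∑ i ∈ Finset.Icc 1 h, c i
          = (∑ i ∈ Finset.Icc 1 j, c i) + ∑ i ∈ Finset.Icc 1 u, c (i + j) := by
        rw [shift_sum c u j, show u + j = h by omega, show 1 + j = j + 1 by omega]
        exact icc_split c j h (by omega)
      have term : ∀ i ∈ Finset.Icc 1 u, c (i + j) ≤ c (i + x) := by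
        intro i hi
        rw [Finset.mem_Icc] at hi
        obtain ⟨i', rfl⟩ : ∃ i', i = i' + 1 := ⟨i - 1, by omega⟩
        have e1 : c (i' + j) = c (i' + j - j + 1 + x) :=
          heq (i' + j) (by omega) (by omega)
        have e2 : i' + j - j + 1 + x = i' + 1 + x := by omega
        rw [e2] at e1
        have e3 : c (i' + 1 + j) ≤ c (i' + j) := by
          rw [show i' + 1 + j = i' + j + 1 by omega]
          exact hcmono (i' + j) (by omega) (by omega)
        rw [← e1]
        exact e3
      have hsum : ∑ i ∈ Finset.Icc 1 u, c (i + j) ≤ ∑ i ∈ Finset.Icc 1 u, c (i + x) :=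
        Finset.sum_le_sum term
      rw [splitc]
      have : ∑ i ∈ Finset.Icc 1 (h - j), c (i + x) = ∑ i ∈ Finset.Icc 1 u, c (i + x) := by
        rw [hu]
      rw [this]
      linarith
    calc ∑ i ∈ Finset.Icc 1 h, c i - ∑ i ∈ Finset.Icc 1 (h - j), c (i + x)
        ≤ ∑ i ∈ Finset.Icc 1 j, c i := key
      _ ≤ ∑ i ∈ Finset.Icc 1 j, a i := ha j hj hjx
  · -- the total sum
    rw [shift_sum c m x, hmx]
    have splitc : ∑ i ∈ Finset.Icc 1 (m + x), c i
        = (∑ i ∈ Finset.Icc 1 x, c i) + ∑ i ∈ Finset.Icc (1 + x) (m + x), c i := by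
      rw [show 1 + x = x + 1 from by omega]
      exact icc_split c x (m + x) (by omega)
    rw [hmx] at splitc
    rw [splitc, haeq]
    ring

/-- If partial sums of `c` are dominated by those of `g` on `1..x` with equal
totals, then `c ≺' (d, g')` for `d` the truncation `d_i = c_{i+x}` and `g'`
the non-increasing rearrangement of `(g_1, …, g_x)`; in particular
`c ≺' (d, (c_1, …, c_x))`. -/
theorem stmt11 (N x : ℕ) (hx : x ≤ N) (c : ℕ → ℤ)
    (hcmono : ∀ i, 1 ≤ i → i < N → c (i + 1) ≤ c i)
    (hcnn : ∀ i, 1 ≤ i → i ≤ N → 0 ≤ c i)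
    (g g' : ℕ → ℤ)
    (hgsum : ∀ j, 1 ≤ j → j ≤ x →
      ∑ i ∈ Finset.Icc 1 j, c i ≤ ∑ i ∈ Finset.Icc 1 j, g i)
    (hgeq : ∑ i ∈ Finset.Icc 1 x, c i = ∑ i ∈ Finset.Icc 1 x, g i)
    (hg'mono : ∀ i, 1 ≤ i → i < x → g' (i + 1) ≤ g' i)
    (hg'perm : (Finset.Icc 1 x).val.map g' = (Finset.Icc 1 x).val.map g) :
    GenMaj (N - x) x (fun i => c (i + x)) g' c ∧
    GenMaj (N - x) x (fun i => c (i + x)) c c := by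
  have hsum' : ∑ i ∈ Finset.Icc 1 x, g' i = ∑ i ∈ Finset.Icc 1 x, g i := by
    rw [Finset.sum, Finset.sum, hg'perm]
  constructor
  · apply genmaj_of N x hx c hcmono g'
    · intro j hj hjx
      exact (hgsum j hj hjx).trans (prefix_le x g g' hg'mono hg'perm j hj hjx)
    · rw [hgeq, hsum']
  · exact genmaj_of N x hx c hcmono c (fun j _ _ => le_refl _) rfl
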